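/- arXiv:1408.7091 — 3 statements merged into one kernel-verified Lean document; each statement's English description precedes it below -/
import Mathlib

section
/- Let G be the free product A ∗ B of two groups A and B, where A and B are both nontrivial, and suppose G is residually finite. Then G has a normal subgroup N of finite index which admits a surjective group homomorphism onto ℤ. (This is the group-theoretic content of Theorem 2.1: for a closed manifold M = X₁ # X₂ of dimension n ≥ 3 with X₁, X₂ not simply connected, π₁(M) is the free product π₁(X₁) ∗ π₁(X₂), and a finite normal covering M̂ → M with first Betti number b₁(M̂) ≥ 1 corresponds exactly to a finite-index normal subgroup N ⊴ π₁(M) with a surjection N → ℤ.) -/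
namespace FPAux
variable {Q : Type*} [Group Q]

def trAut (q : Q) : (Q → ℤ) ≃+ (Q → ℤ) where
  toFun f := fun x => f (q⁻¹ * x)
  invFun f := fun x => f (q * x)
  left_inv f := by funext x; beta_reduce; rw [← mul_assoc, inv_mul_cancel, one_mul]
  right_inv f := by funext x; beta_reduce; rw [← mul_assoc, mul_inv_cancel, one_mul]
  map_add' f g := rfl

def qAct : Q →* MulAut (Multiplicative (Q → ℤ)) where
  toFun q := AddEquiv.toMultiplicative (trAut q)
  map_one' := by
    ext f : 1
    show Multiplicative.ofAdd (trAut (1:Q) f.toAdd) = f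
    simp [trAut]
  map_mul' q r := by
    ext f : 1
    show Multiplicative.ofAdd (trAut (q*r) f.toAdd) = Multiplicative.ofAdd (trAut q (trAut r f.toAdd))
    simp only [trAut, AddEquiv.coe_mk, Equiv.coe_fn_mk, EmbeddingLike.apply_eq_iff_eq]
    funext x
    rw [mul_inv_rev, mul_assoc]

variable {G : Type*} [Group G] (φ : G →* Q) (ζ : Q → ℤ)

@[simp] lemma qAct_apply (q : Q) (f : Multiplicative (Q → ℤ)) (x : Q) :
    (qAct q f).toAdd x = f.toAdd (q⁻¹ * x) := rfl

def innerHom : G →* (Multiplicative (Q → ℤ)) ⋊[qAct] Q where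
  toFun g := ⟨Multiplicative.ofAdd fun x => ζ ((φ g)⁻¹ * x) - ζ x, φ g⟩
  map_one' := by
    ext : 1
    · show (fun x => ζ ((φ 1)⁻¹ * x) - ζ x) = ((1 : Multiplicative (Q → ℤ))).toAdd
      funext x; show ζ ((φ 1)⁻¹ * x) - ζ x = (0 : Q → ℤ) x; simp
    · simp
  map_mul' g h := by
    ext : 1
    · show (fun x => ζ ((φ (g*h))⁻¹ * x) - ζ x) =
        ((Multiplicative.ofAdd fun x => ζ ((φ g)⁻¹ * x) - ζ x) *
          qAct (φ g) (Multiplicative.ofAdd fun x => ζ ((φ h)⁻¹ * x) - ζ x)).toAdd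
      funext x
      show ζ ((φ (g*h))⁻¹ * x) - ζ x =
        (ζ ((φ g)⁻¹ * x) - ζ x) + (ζ ((φ h)⁻¹ * ((φ g)⁻¹ * x)) - ζ ((φ g)⁻¹ * x))
      rw [map_mul, mul_inv_rev, mul_assoc]
      ring
    · show φ (g*h) = φ g * φ h
      exact map_mul φ g h

section Coprod
variable {A B : Type*} [Group A] [Group B]
  (φ : Monoid.Coprod A B →* Q) (ζ : Q → ℤ)

def sigmaHom : Monoid.Coprod A B →* (Multiplicative (Q → ℤ)) ⋊[qAct] Q :=
  Monoid.Coprod.lift ((innerHom φ ζ).comp Monoid.Coprod.inl)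
    (SemidirectProduct.inr.comp (φ.comp Monoid.Coprod.inr))

/-- The derivation `D`. -/
def D (g : Monoid.Coprod A B) : Q → ℤ := ((sigmaHom φ ζ g).left).toAdd

lemma right_sigmaHom (g : Monoid.Coprod A B) : (sigmaHom φ ζ g).right = φ g := by
  have : SemidirectProduct.rightHom.comp (sigmaHom φ ζ) = φ := by
    apply Monoid.Coprod.hom_ext
    · ext a; rfl
    · ext b; rfl
  calc (sigmaHom φ ζ g).right = SemidirectProduct.rightHom (sigmaHom φ ζ g) := rfl
  _ = φ g := by rw [← this]; rfl

lemma D_mul (g h : Monoid.Coprod A B) (x : Q) :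
    D φ ζ (g * h) x = D φ ζ g x + D φ ζ h ((φ g)⁻¹ * x) := by
  have : sigmaHom φ ζ (g * h) = sigmaHom φ ζ g * sigmaHom φ ζ h := map_mul _ _ _
  have h1 : (sigmaHom φ ζ (g*h)).left
      = (sigmaHom φ ζ g).left * qAct ((sigmaHom φ ζ g).right) (sigmaHom φ ζ h).left := by
    rw [this]; rfl
  have : D φ ζ (g*h) = D φ ζ g + (qAct ((sigmaHom φ ζ g).right) (sigmaHom φ ζ h).left).toAdd := by
    unfold D; rw [h1]; rfl
  rw [this]
  simp only [Pi.add_apply, qAct_apply, right_sigmaHom]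
  rfl

lemma D_one : D φ ζ 1 = 0 := by
  unfold D; rw [map_one]; rfl

lemma D_inl (a : A) :
    D φ ζ (Monoid.Coprod.inl a) = fun x => ζ ((φ (Monoid.Coprod.inl a))⁻¹ * x) - ζ x := by
  unfold D sigmaHom
  rw [Monoid.Coprod.lift_apply_inl]
  rfl

lemma D_inr (b : B) : D φ ζ (Monoid.Coprod.inr b) = 0 := by
  unfold D sigmaHom
  rw [Monoid.Coprod.lift_apply_inr]
  rfl

end Coprod
end FPAux

namespace FPAux
section Quot
variable {A B : Type*} [Group A] [Group B]
variable (N : Subgroup (Monoid.Coprod A B)) [N.Normal]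
variable (ζ : (Monoid.Coprod A B ⧸ N) → ℤ)

lemma D_const_on_fibers (H : ∀ n ∈ N, D (QuotientGroup.mk' N) ζ n = 0)
    {g g' : Monoid.Coprod A B} (h : QuotientGroup.mk' N g = QuotientGroup.mk' N g') :
    D (QuotientGroup.mk' N) ζ g = D (QuotientGroup.mk' N) ζ g' := by
  have hn : g⁻¹ * g' ∈ N := by
    rw [QuotientGroup.mk'_apply, QuotientGroup.mk'_apply] at h
    exact (QuotientGroup.eq).1 h
  have hg' : g' = g * (g⁻¹ * g') := by group
  funext x
  rw [hg', D_mul, H _ hn]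
  simp

/-- The potential function. -/
noncomputable def pot : (Monoid.Coprod A B ⧸ N) → ℤ :=
  fun x => D (QuotientGroup.mk' N) ζ (x⁻¹).out 1

lemma D_eq_pot (H : ∀ n ∈ N, D (QuotientGroup.mk' N) ζ n = 0)
    (g : Monoid.Coprod A B) (x : Monoid.Coprod A B ⧸ N) :
    D (QuotientGroup.mk' N) ζ g x
      = pot N ζ (((QuotientGroup.mk' N) g)⁻¹ * x) - pot N ζ x := by
  set φ := QuotientGroup.mk' N
  set k := (x⁻¹).out with hkdef
  have hout : ∀ q : Monoid.Coprod A B ⧸ N, φ q.out = q := by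
    intro q; rw [QuotientGroup.mk'_apply]; exact Quotient.out_eq' q
  have hk : φ k = x⁻¹ := hout _
  have h1 : φ (k * g) = φ (((φ g)⁻¹ * x)⁻¹).out := by
    rw [map_mul, hk, hout]
    rw [mul_inv_rev, inv_inv]
  have h2 : pot N ζ ((φ g)⁻¹ * x) = D φ ζ (k * g) 1 := by
    unfold pot
    rw [D_const_on_fibers N ζ H h1]
  rw [h2, D_mul, hk, inv_inv, mul_one]
  unfold pot
  rw [hkdef]
  ring
end Quot
end FPAux

namespace FPAux
section LinAlg
variable {Q : Type*} [Group Q] [Fintype Q]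

/-- Functions invariant under left translation by `c`. -/
def invSub (c : Q) : Submodule ℚ (Q → ℚ) where
  carrier := {f | ∀ x, f (c * x) = f x}
  add_mem' := by intro f g hf hg x; simp only [Pi.add_apply, hf x, hg x]
  zero_mem' := by intro x; rfl
  smul_mem' := by intro r f hf x; simp only [Pi.smul_apply, hf x]

lemma invSub_zpow {c : Q} {f : Q → ℚ} (hf : ∀ x, f (c * x) = f x) (k : ℤ) (x : Q) :
    f (c ^ k * x) = f x := by
  induction k using Int.induction_on with
  | zero => simp
  | succ n ih =>
      have : (c : Q) ^ ((n : ℤ) + 1) = c * c ^ (n : ℤ) := by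
        rw [add_comm, zpow_add, zpow_one]
      rw [this, mul_assoc, hf, ih]
  | pred n ih =>
      have h2 := hf (c ^ (-(n : ℤ) - 1) * x)
      rw [← mul_assoc, ← zpow_one_add, add_sub_cancel] at h2
      rw [← h2, ih]

lemma two_mul_finrank_invSub_le (c : Q) (hc : c ≠ 1) :
    2 * Module.finrank ℚ (invSub c) ≤ Fintype.card Q := by
  classical
  let Ω := MulAction.orbitRel.Quotient (Subgroup.zpowers c) Q
  have : Finite Ω := Quotient.finite _
  have : Fintype Ω := Fintype.ofFinite _
  -- injective linear map into functions on orbits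
  let L : invSub c →ₗ[ℚ] (Ω → ℚ) :=
    { toFun := fun f ω => f.1 ω.out
      map_add' := fun f g => rfl
      map_smul' := fun r f => rfl }
  have hL : Function.Injective L := by
    intro f g hfg
    ext x
    have h1 : ∀ (h : invSub c) (y : Q),
        h.1 y = L h (Quotient.mk (MulAction.orbitRel (Subgroup.zpowers c) Q) y) := by
      intro h y
      have hrel : (MulAction.orbitRel (Subgroup.zpowers c) Q).r (Quotient.mk (MulAction.orbitRel (Subgroup.zpowers c) Q) y : Ω).out y := by
        apply Quotient.exact
        rw [Quotient.out_eq]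
      obtain ⟨s, hs⟩ := hrel
      obtain ⟨k, hk⟩ := Subgroup.mem_zpowers_iff.1 s.2
      have hout : (Quotient.mk (MulAction.orbitRel (Subgroup.zpowers c) Q) y : Ω).out = c ^ k * y := by
        rw [← hs]
        show (s : Q) * y = c ^ k * y
        rw [hk]
      show h.1 y = h.1 (Quotient.mk (MulAction.orbitRel (Subgroup.zpowers c) Q) y : Ω).out
      rw [hout, invSub_zpow h.2]
    rw [h1 f x, h1 g x, hfg]
  have hfin : Module.finrank ℚ (invSub c) ≤ Fintype.card Ω := by
    have := LinearMap.finrank_le_finrank_of_injective hL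
    rwa [Module.finrank_pi] at this
  -- each orbit has at least two elements
  have horb : ∀ ω : Ω, 2 ≤ Fintype.card (MulAction.orbit (Subgroup.zpowers c) ω.out) := by
    intro ω
    have h1 : ω.out ∈ MulAction.orbit (Subgroup.zpowers c) ω.out := MulAction.mem_orbit_self _
    have h2 : (⟨c, Subgroup.mem_zpowers c⟩ : Subgroup.zpowers c) • ω.out ∈ MulAction.orbit (Subgroup.zpowers c) ω.out :=
      MulAction.mem_orbit _ _
    have hne : (⟨c, Subgroup.mem_zpowers c⟩ : Subgroup.zpowers c) • ω.out ≠ ω.out := by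
      show c * ω.out ≠ ω.out
      intro h
      exact hc (mul_right_cancel (by rwa [one_mul]))
    have : Nontrivial (MulAction.orbit (Subgroup.zpowers c) ω.out) :=
      ⟨⟨⟨_, h2⟩, ⟨_, h1⟩, by simpa [Subtype.ext_iff] using hne⟩⟩
    exact Fintype.one_lt_card
  have hcard : 2 * Fintype.card Ω ≤ Fintype.card Q := by
    have e := MulAction.selfEquivSigmaOrbits (Subgroup.zpowers c) Q
    have : Fintype.card Q = ∑ ω : Ω, Fintype.card (MulAction.orbit (Subgroup.zpowers c) ω.out) := by
      rw [Fintype.card_congr e, Fintype.card_sigma]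
    rw [this]
    calc 2 * Fintype.card Ω = ∑ _ω : Ω, 2 := by
          rw [Finset.sum_const, Finset.card_univ, smul_eq_mul, mul_comm]
    _ ≤ ∑ ω : Ω, Fintype.card (MulAction.orbit (Subgroup.zpowers c) ω.out) :=
          Finset.sum_le_sum fun ω _ => horb ω
  omega

lemma not_forall_decomp (c d : Q) (hc : c ≠ 1) (hd : d ≠ 1)
    (H : ∀ ζ : Q → ℤ, ∃ w u : Q → ℤ,
      (∀ x, w (c * x) = w x) ∧ (∀ x, u (d * x) = u x) ∧ ζ = w + u) : False := by
  classical
  have hsingle : ∀ x₀ : Q, (Pi.single x₀ (1:ℚ) : Q → ℚ) ∈ invSub c ⊔ invSub d := by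
    intro x₀
    obtain ⟨w, u, hw, hu, hζ⟩ := H (Pi.single x₀ (1:ℤ))
    have hwQ : (fun y => ((w y : ℤ) : ℚ)) ∈ invSub c := by
      intro x; simp only []; exact_mod_cast congrArg (fun t => ((t : ℤ) : ℚ)) (hw x)
    have huQ : (fun y => ((u y : ℤ) : ℚ)) ∈ invSub d := by
      intro x; simp only []; exact_mod_cast congrArg (fun t => ((t : ℤ) : ℚ)) (hu x)
    have heq : (Pi.single x₀ (1:ℚ) : Q → ℚ)
        = (fun y => ((w y : ℤ) : ℚ)) + (fun y => ((u y : ℤ) : ℚ)) := by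
      funext y
      have hy2 : (Pi.single x₀ (1:ℤ) : Q → ℤ) y = w y + u y := by rw [hζ]; rfl
      have hcast : (Int.cast ((Pi.single x₀ (1:ℤ) : Q → ℤ) y) : ℚ) = (Pi.single x₀ (1:ℚ) : Q → ℚ) y := by
        by_cases hy : y = x₀
        · subst hy; simp
        · simp [Pi.single_apply, hy]
      rw [Pi.add_apply, ← hcast, hy2]
      push_cast
      ring
    rw [heq]
    exact Submodule.add_mem _ (Submodule.mem_sup_left hwQ) (Submodule.mem_sup_right huQ)
  have hsup : invSub c ⊔ invSub d = ⊤ := by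
    rw [eq_top_iff]
    intro f _
    have : f = ∑ x : Q, f x • (Pi.single x (1:ℚ) : Q → ℚ) := by
      funext y
      rw [Finset.sum_apply]
      simp [Pi.single_apply]
    rw [this]
    exact Submodule.sum_mem _ fun x _ =>
      Submodule.smul_mem _ _ (hsingle x)
  have h1 := two_mul_finrank_invSub_le c hc
  have h2 := two_mul_finrank_invSub_le d hd
  have h3 : 0 < Module.finrank ℚ (invSub c ⊓ invSub d : Submodule ℚ (Q → ℚ)) := by
    have hmem : (fun _ : Q => (1:ℚ)) ∈ (invSub c ⊓ invSub d : Submodule ℚ (Q → ℚ)) :=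
      ⟨fun x => rfl, fun x => rfl⟩
    have hne0 : ((fun _ : Q => (1:ℚ)) : Q → ℚ) ≠ 0 := by
      intro h
      have := congrFun h 1
      simpa using this
    have : Nontrivial (invSub c ⊓ invSub d : Submodule ℚ (Q → ℚ)) :=
      ⟨⟨⟨_, hmem⟩, 0, fun h => hne0 (by simpa [Subtype.ext_iff] using h)⟩⟩
    exact Module.finrank_pos
  have h4 := Submodule.finrank_sup_add_finrank_inf_eq (invSub c) (invSub d)
  have h5 : Module.finrank ℚ ↥(invSub c ⊔ invSub d) = Fintype.card Q := by
    rw [hsup, finrank_top, Module.finrank_pi]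
  omega

end LinAlg
end FPAux


/-- A group `G` is residually finite if for every `g ≠ 1` there is a
normal subgroup of finite index not containing `g`. -/
def IsResiduallyFinite (G : Type*) [Group G] : Prop :=
  ∀ g : G, g ≠ 1 → ∃ N : Subgroup G, N.Normal ∧ N.FiniteIndex ∧ g ∉ N

/-- If the free product `A ∗ B` of two nontrivial groups is residually finite,
then it has a finite-index normal subgroup admitting a surjective homomorphism
onto `ℤ`. -/
theorem freeProduct_residuallyFinite_exists_finiteIndex_normal_surj_int
    (A B : Type*) [Group A] [Group B] [Nontrivial A] [Nontrivial B]
    (hRF : IsResiduallyFinite (Monoid.Coprod A B)) :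
    ∃ N : Subgroup (Monoid.Coprod A B), N.Normal ∧ N.FiniteIndex ∧
      ∃ f : N →* Multiplicative ℤ, Function.Surjective f := by
  classical
  obtain ⟨a, ha⟩ := exists_ne (1 : A)
  obtain ⟨b, hb⟩ := exists_ne (1 : B)
  have hia : (Monoid.Coprod.inl a : Monoid.Coprod A B) ≠ 1 := fun h =>
    ha (Monoid.Coprod.inl_injective (h.trans (map_one Monoid.Coprod.inl).symm))
  have hib : (Monoid.Coprod.inr b : Monoid.Coprod A B) ≠ 1 := fun h =>
    hb (Monoid.Coprod.inr_injective (h.trans (map_one Monoid.Coprod.inr).symm))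
  obtain ⟨N₁, hN₁n, hN₁f, hN₁a⟩ := hRF _ hia
  obtain ⟨N₂, hN₂n, hN₂f, hN₂b⟩ := hRF _ hib
  haveI := hN₁n; haveI := hN₂n; haveI := hN₁f; haveI := hN₂f
  refine ⟨N₁ ⊓ N₂, inferInstance, inferInstance, ?_⟩
  set N : Subgroup (Monoid.Coprod A B) := N₁ ⊓ N₂ with hNdef
  haveI : N.Normal := inferInstance
  haveI : N.FiniteIndex := inferInstance
  haveI : Finite (Monoid.Coprod A B ⧸ N) := inferInstance
  haveI : Fintype (Monoid.Coprod A B ⧸ N) := Fintype.ofFinite _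
  have hmemN : ∀ g : Monoid.Coprod A B, (QuotientGroup.mk' N) g = 1 ↔ g ∈ N := by
    intro g
    rw [QuotientGroup.mk'_apply, QuotientGroup.eq_one_iff]
  have hc : (QuotientGroup.mk' N) (Monoid.Coprod.inl a) ≠ 1 := by
    rw [Ne, hmemN]
    intro h
    exact hN₁a h.1
  have hd : (QuotientGroup.mk' N) (Monoid.Coprod.inr b) ≠ 1 := by
    rw [Ne, hmemN]
    intro h
    exact hN₂b h.2
  -- there is a choice of `ζ` for which the derivation is nonzero somewhere on `N`
  have hex : ∃ ζ : (Monoid.Coprod A B ⧸ N) → ℤ,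
      ∃ g, g ∈ N ∧ FPAux.D (QuotientGroup.mk' N) ζ g ≠ 0 := by
    by_contra hcon
    push_neg at hcon
    apply FPAux.not_forall_decomp ((QuotientGroup.mk' N) (Monoid.Coprod.inl a))
      ((QuotientGroup.mk' N) (Monoid.Coprod.inr b)) hc hd
    intro ζ
    have Hz : ∀ n ∈ N, FPAux.D (QuotientGroup.mk' N) ζ n = 0 := fun n hn => hcon ζ n hn
    refine ⟨fun x => ζ x - FPAux.pot N ζ x, fun x => FPAux.pot N ζ x, ?_, ?_, ?_⟩
    · intro x
      have h1 := FPAux.D_eq_pot N ζ Hz (Monoid.Coprod.inl a)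
        ((QuotientGroup.mk' N) (Monoid.Coprod.inl a) * x)
      rw [FPAux.D_inl] at h1
      simp only [inv_mul_cancel_left] at h1
      beta_reduce
      linarith [h1]
    · intro x
      have h1 := FPAux.D_eq_pot N ζ Hz (Monoid.Coprod.inr b)
        ((QuotientGroup.mk' N) (Monoid.Coprod.inr b) * x)
      rw [FPAux.D_inr] at h1
      simp only [inv_mul_cancel_left, Pi.zero_apply] at h1
      beta_reduce
      linarith [h1]
    · funext x
      simp
  obtain ⟨ζ, g0, hg0N, hD0⟩ := hex
  obtain ⟨x₀, hx₀⟩ := Function.ne_iff.1 hD0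
  simp only [Pi.zero_apply] at hx₀
  -- the evaluation of the derivation at `x₀` is an additive map on `N`
  set Dz : Monoid.Coprod A B → ℤ := fun g => FPAux.D (QuotientGroup.mk' N) ζ g x₀ with hDzdef
  have hadd : ∀ n m : Monoid.Coprod A B, n ∈ N → Dz (n * m) = Dz n + Dz m := by
    intro n m hn
    rw [hDzdef]
    beta_reduce
    rw [FPAux.D_mul, (hmemN n).2 hn, inv_one, one_mul]
  have hone : Dz 1 = 0 := by
    rw [hDzdef]
    beta_reduce
    rw [FPAux.D_one]
    rfl
  have hinv : ∀ n ∈ N, Dz n⁻¹ = - Dz n := by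
    intro n hn
    have h1 := hadd n n⁻¹ hn
    rw [mul_inv_cancel, hone] at h1
    linarith
  let S : AddSubgroup ℤ :=
  { carrier := {t | ∃ n ∈ N, Dz n = t}
    zero_mem' := ⟨1, N.one_mem, hone⟩
    add_mem' := by
      rintro s t ⟨n, hn, rfl⟩ ⟨m, hm, rfl⟩
      exact ⟨n * m, N.mul_mem hn hm, hadd n m hn⟩
    neg_mem' := by
      rintro s ⟨n, hn, rfl⟩
      exact ⟨n⁻¹, N.inv_mem hn, hinv n hn⟩ }
  obtain ⟨k, hk⟩ := Int.subgroup_cyclic S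
  have hmemS : ∀ t, t ∈ S ↔ ∃ m : ℤ, t = m * k := by
    intro t
    rw [hk]
    constructor
    · intro ht
      obtain ⟨m, hm⟩ := AddSubgroup.mem_closure_singleton.1 ht
      exact ⟨m, by rw [← hm, smul_eq_mul]⟩
    · rintro ⟨m, rfl⟩
      exact AddSubgroup.mem_closure_singleton.2 ⟨m, by rw [smul_eq_mul]⟩
  have hk0 : k ≠ 0 := by
    intro h
    obtain ⟨m, hm⟩ := (hmemS (Dz g0)).1 ⟨g0, hg0N, rfl⟩
    rw [h, mul_zero] at hm
    exact hx₀ hm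
  have hdvd : ∀ n ∈ N, ∃ m : ℤ, Dz n = m * k := fun n hn => (hmemS (Dz n)).1 ⟨n, hn, rfl⟩
  refine ⟨MonoidHom.mk' (fun n => Multiplicative.ofAdd (Dz ↑n / k)) ?_, ?_⟩
  · intro n m
    have h1 : Dz (↑n * ↑m) = Dz ↑n + Dz ↑m := hadd _ _ n.2
    obtain ⟨p, hp⟩ := hdvd ↑n n.2
    obtain ⟨q, hq⟩ := hdvd ↑m m.2
    have h2 : Dz (↑(n * m)) / k = Dz ↑n / k + Dz ↑m / k := by
      have h3 : (↑(n * m) : Monoid.Coprod A B) = ↑n * ↑m := rfl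
      rw [h3, h1, hp, hq, ← add_mul, Int.mul_ediv_cancel _ hk0,
        Int.mul_ediv_cancel _ hk0, Int.mul_ediv_cancel _ hk0]
    show Multiplicative.ofAdd (Dz ↑(n * m) / k)
        = Multiplicative.ofAdd (Dz ↑n / k) * Multiplicative.ofAdd (Dz ↑m / k)
    rw [h2]
    rfl
  · intro t
    have htS : (t.toAdd * k : ℤ) ∈ S := (hmemS _).2 ⟨t.toAdd, rfl⟩
    obtain ⟨n, hn, hDn⟩ := htS
    refine ⟨⟨n, hn⟩, ?_⟩
    show Multiplicative.ofAdd (Dz n / k) = t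
    rw [hDn, Int.mul_ediv_cancel _ hk0]
    rfl
end

section
/- Let (X, μ) be a measure space, let φ, f, s : X → ℝ be measurable functions with f ≥ 0 and f integrable, φ ∈ L²(μ) ∩ L⁶(μ), and s·φ² integrable. Let Y ≥ 0 and m ≥ 0 be real numbers such that Y·‖φ‖²_{L⁶} ≤ ∫_X (8f + s·φ²) dμ and m·‖φ‖²_{L²} ≤ ∫_X (4f + s·φ²) dμ. Then √(Y·m)·‖φ‖²_{L³} ≤ ∫_X (6f + s·φ²) dμ. -/
open MeasureTheory Real
open scoped ENNReal

/-- Interpolation inequality: if `Y ‖φ‖²_{L⁶} ≤ ∫ (8f + sφ²)` and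
`m ‖φ‖²_{L²} ≤ ∫ (4f + sφ²)`, then `√(Ym) ‖φ‖²_{L³} ≤ ∫ (6f + sφ²)`. -/
theorem sqrt_interp_sobolev {X : Type*} [MeasurableSpace X] (μ : Measure X)
    (φ f s : X → ℝ) (hφ : Measurable φ) (hf : Measurable f) (hs : Measurable s)
    (hf0 : ∀ x, 0 ≤ f x) (hfint : Integrable f μ)
    (hφ2 : MemLp φ 2 μ) (hφ6 : MemLp φ 6 μ)
    (hsφ : Integrable (fun x => s x * φ x ^ 2) μ)
    (Y m : ℝ) (hY : 0 ≤ Y) (hm : 0 ≤ m)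
    (hY6 : Y * (∫ x, |φ x| ^ 6 ∂μ) ^ ((1 : ℝ) / 3) ≤ ∫ x, (8 * f x + s x * φ x ^ 2) ∂μ)
    (hm2 : m * (∫ x, φ x ^ 2 ∂μ) ≤ ∫ x, (4 * f x + s x * φ x ^ 2) ∂μ) :
    Real.sqrt (Y * m) * (∫ x, |φ x| ^ 3 ∂μ) ^ ((2 : ℝ) / 3) ≤
      ∫ x, (6 * f x + s x * φ x ^ 2) ∂μ := by
  set a : X → ℝ := fun x => |φ x| ^ ((3:ℝ)/2) with ha
  have h32 : (3:ℝ≥0∞)/2 = ENNReal.ofReal (3/2) := by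
    rw [ENNReal.ofReal_div_of_pos (by norm_num)]; norm_num
  have h32t : ((3:ℝ≥0∞)/2).toReal = (3:ℝ)/2 := by rw [ENNReal.toReal_div]; norm_num
  have ha4 : MemLp a (ENNReal.ofReal 4) μ := by
    have h := hφ6.norm_rpow_div ((3:ℝ≥0∞)/2)
    have h2 : (6 : ℝ≥0∞) / (3/2) = ENNReal.ofReal 4 := by
      rw [h32, show (6:ℝ≥0∞) = ENNReal.ofReal 6 by norm_num,
        ← ENNReal.ofReal_div_of_pos (by norm_num)]
      norm_num
    simpa only [h32t, h2, Real.norm_eq_abs] using h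
  have ha43 : MemLp a (ENNReal.ofReal (4/3)) μ := by
    have h := hφ2.norm_rpow_div ((3:ℝ≥0∞)/2)
    have h2 : (2 : ℝ≥0∞) / (3/2) = ENNReal.ofReal (4/3) := by
      rw [h32, show (2:ℝ≥0∞) = ENNReal.ofReal 2 by norm_num,
        ← ENNReal.ofReal_div_of_pos (by norm_num)]
      norm_num
    simpa only [h32t, h2, Real.norm_eq_abs] using h
  have hpq : (4:ℝ).HolderConjugate (4/3) := Real.holderConjugate_iff.mpr ⟨by norm_num, by norm_num⟩
  have ha0 : 0 ≤ᵐ[μ] a := Filter.Eventually.of_forall fun x =>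
    Real.rpow_nonneg (abs_nonneg _) _
  have H := integral_mul_le_Lp_mul_Lq_of_nonneg (μ := μ) hpq ha0 ha0 ha4 ha43
  -- rewrite the three integrals
  have e1 : ∫ x, a x * a x ∂μ = ∫ x, |φ x| ^ 3 ∂μ := by
    refine integral_congr_ae (Filter.Eventually.of_forall fun x => ?_)
    show |φ x| ^ ((3:ℝ)/2) * |φ x| ^ ((3:ℝ)/2) = |φ x| ^ 3
    rw [← Real.rpow_natCast (|φ x|) 3, ← Real.rpow_add' (abs_nonneg _) (by norm_num)]
    norm_num
  have e2 : ∫ x, a x ^ (4:ℝ) ∂μ = ∫ x, |φ x| ^ 6 ∂μ := by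
    refine integral_congr_ae (Filter.Eventually.of_forall fun x => ?_)
    show (|φ x| ^ ((3:ℝ)/2)) ^ (4:ℝ) = |φ x| ^ 6
    rw [← Real.rpow_natCast (|φ x|) 6, ← Real.rpow_mul (abs_nonneg _)]
    norm_num
  have e3 : ∫ x, a x ^ ((4:ℝ)/3) ∂μ = ∫ x, φ x ^ 2 ∂μ := by
    refine integral_congr_ae (Filter.Eventually.of_forall fun x => ?_)
    show (|φ x| ^ ((3:ℝ)/2)) ^ ((4:ℝ)/3) = φ x ^ 2
    rw [← Real.rpow_mul (abs_nonneg _), show (3:ℝ)/2*(4/3) = 2 by norm_num,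
      show ((2:ℝ)) = ((2:ℕ):ℝ) by norm_num, Real.rpow_natCast, sq_abs]
  rw [e1, e2, e3, show (1:ℝ)/(4/3) = 3/4 by norm_num] at H
  set T3 := ∫ x, |φ x| ^ 3 ∂μ
  set T6 := ∫ x, |φ x| ^ 6 ∂μ
  set T2 := ∫ x, φ x ^ 2 ∂μ
  have hT3 : 0 ≤ T3 := integral_nonneg fun x => by positivity
  have hT6 : 0 ≤ T6 := integral_nonneg fun x => by positivity
  have hT2 : 0 ≤ T2 := integral_nonneg fun x => sq_nonneg _
  have step2 : T3 ^ ((2:ℝ)/3) ≤ T6 ^ ((1:ℝ)/6) * T2 ^ ((1:ℝ)/2) := by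
    calc T3 ^ ((2:ℝ)/3) ≤ (T6 ^ ((1:ℝ)/4) * T2 ^ ((3:ℝ)/4)) ^ ((2:ℝ)/3) :=
          Real.rpow_le_rpow hT3 H (by norm_num)
      _ = T6 ^ ((1:ℝ)/6) * T2 ^ ((1:ℝ)/2) := by
          rw [Real.mul_rpow (Real.rpow_nonneg hT6 _) (Real.rpow_nonneg hT2 _),
            ← Real.rpow_mul hT6, ← Real.rpow_mul hT2]
          norm_num
  set A := Y * T6 ^ ((1:ℝ)/3)
  set B := m * T2
  have hA : 0 ≤ A := mul_nonneg hY (Real.rpow_nonneg hT6 _)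
  have hB : 0 ≤ B := mul_nonneg hm hT2
  have eq1 : Real.sqrt (Y * m) * (T6 ^ ((1:ℝ)/6) * T2 ^ ((1:ℝ)/2)) = Real.sqrt (A * B) := by
    rw [show A * B = (Y * m) * (T6 ^ ((1:ℝ)/3) * T2) by ring,
      Real.sqrt_mul (mul_nonneg hY hm),
      Real.sqrt_mul (Real.rpow_nonneg hT6 _), Real.sqrt_eq_rpow (T6 ^ ((1:ℝ)/3)),
      ← Real.rpow_mul hT6, Real.sqrt_eq_rpow T2]
    norm_num
  have amgm : Real.sqrt (A * B) ≤ (A + B) / 2 := by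
    rw [Real.sqrt_mul hA]
    nlinarith [sq_nonneg (Real.sqrt A - Real.sqrt B), Real.sq_sqrt hA, Real.sq_sqrt hB,
      Real.sqrt_nonneg A, Real.sqrt_nonneg B]
  have i8 : Integrable (fun x => 8 * f x + s x * φ x ^ 2) μ := (hfint.const_mul 8).add hsφ
  have i4 : Integrable (fun x => 4 * f x + s x * φ x ^ 2) μ := (hfint.const_mul 4).add hsφ
  have sum : (∫ x, (8 * f x + s x * φ x ^ 2) ∂μ) + (∫ x, (4 * f x + s x * φ x ^ 2) ∂μ)
      = 2 * ∫ x, (6 * f x + s x * φ x ^ 2) ∂μ := by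
    rw [← integral_add i8 i4, ← integral_const_mul]
    exact integral_congr_ae (Filter.Eventually.of_forall fun x => by ring)
  calc Real.sqrt (Y * m) * T3 ^ ((2:ℝ)/3)
      ≤ Real.sqrt (Y * m) * (T6 ^ ((1:ℝ)/6) * T2 ^ ((1:ℝ)/2)) :=
        mul_le_mul_of_nonneg_left step2 (Real.sqrt_nonneg _)
    _ = Real.sqrt (A * B) := eq1
    _ ≤ (A + B) / 2 := amgm
    _ ≤ ((∫ x, (8 * f x + s x * φ x ^ 2) ∂μ) + (∫ x, (4 * f x + s x * φ x ^ 2) ∂μ)) / 2 := by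
        apply div_le_div_of_nonneg_right (add_le_add hY6 hm2) (by norm_num) |>.trans_eq rfl
    _ = ∫ x, (6 * f x + s x * φ x ^ 2) ∂μ := by rw [sum]; ring
end

section
/- Let (X, μ) be a measure space, let φ, f, s : X → ℝ be measurable functions with f ≥ 0 and f integrable, φ ∈ L²(μ) ∩ L⁶(μ), and s·φ² integrable. Let Y ≥ 0 and κ ≥ 0 be real numbers such that s ≥ κ pointwise and Y·‖φ‖²_{L⁶} ≤ ∫_X (8f + s·φ²) dμ. Then Y^{3/4}·κ^{1/4}·‖φ‖²_{L⁴} ≤ ∫_X (6f + s·φ²) dμ. -/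
open MeasureTheory Real

/-- Interpolation inequality: if `s ≥ κ ≥ 0` pointwise and
`Y ‖φ‖²_{L⁶} ≤ ∫ (8f + sφ²)`, then `Y^{3/4} κ^{1/4} ‖φ‖²_{L⁴} ≤ ∫ (6f + sφ²)`. -/
theorem rpow_interp_sobolev {X : Type*} [MeasurableSpace X] (μ : Measure X)
    (φ f s : X → ℝ) (hφ : Measurable φ) (hf : Measurable f) (hs : Measurable s)
    (hf0 : ∀ x, 0 ≤ f x) (hfint : Integrable f μ)
    (hφ2 : MemLp φ 2 μ) (hφ6 : MemLp φ 6 μ)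
    (hsφ : Integrable (fun x => s x * φ x ^ 2) μ)
    (Y κ : ℝ) (hY : 0 ≤ Y) (hκ : 0 ≤ κ) (hsκ : ∀ x, κ ≤ s x)
    (hY6 : Y * (∫ x, |φ x| ^ 6 ∂μ) ^ ((1 : ℝ) / 3) ≤ ∫ x, (8 * f x + s x * φ x ^ 2) ∂μ) :
    Y ^ ((3 : ℝ) / 4) * κ ^ ((1 : ℝ) / 4) * (∫ x, φ x ^ 4 ∂μ) ^ ((1 : ℝ) / 2) ≤
      ∫ x, (6 * f x + s x * φ x ^ 2) ∂μ := by
  set I6 := ∫ x, |φ x| ^ 6 ∂μ with hI6def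
  set I2 := ∫ x, φ x ^ 2 ∂μ with hI2def
  set I4 := ∫ x, φ x ^ 4 ∂μ with hI4def
  have hI6 : 0 ≤ I6 := integral_nonneg fun x => by positivity
  have hI2 : 0 ≤ I2 := integral_nonneg fun x => by positivity
  have hI4 : 0 ≤ I4 := integral_nonneg fun x => by positivity
  -- MemLp facts
  have h3 : MemLp (fun x => ‖φ x‖ ^ ((3 : ENNReal)).toReal) ((6 : ENNReal) / 3) μ :=
    hφ6.norm_rpow_div 3
  have h63 : (6 : ENNReal) / 3 = 2 := by
    rw [eq_comm, ENNReal.eq_div_iff (by norm_num) (by norm_num)]; norm_num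
  rw [h63] at h3
  have h3' : MemLp (fun x => |φ x| ^ (3 : ℕ)) (ENNReal.ofReal 2) μ := by
    have h2 : ENNReal.ofReal 2 = 2 := by norm_num
    rw [h2]
    refine h3.ae_eq (Filter.Eventually.of_forall fun x => ?_)
    show ‖φ x‖ ^ ((3 : ENNReal)).toReal = |φ x| ^ (3 : ℕ)
    rw [show ((3 : ENNReal)).toReal = ((3 : ℕ) : ℝ) by simp, Real.rpow_natCast,
      Real.norm_eq_abs]
  have h1' : MemLp (fun x => |φ x|) (ENNReal.ofReal 2) μ := by
    have : ENNReal.ofReal 2 = 2 := by norm_num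
    rw [this]
    exact hφ2.norm
  -- Cauchy–Schwarz: I4 ≤ I6^{1/2} * I2^{1/2}
  have hCS : I4 ≤ I6 ^ ((1 : ℝ) / 2) * I2 ^ ((1 : ℝ) / 2) := by
    have hpq : (2 : ℝ).HolderConjugate 2 := Real.HolderConjugate.two_two
    have := integral_mul_le_Lp_mul_Lq_of_nonneg hpq
      (Filter.Eventually.of_forall (fun x => by positivity : ∀ x, 0 ≤ |φ x| ^ (3 : ℕ)))
      (Filter.Eventually.of_forall (fun x => abs_nonneg (φ x))) h3' h1'
    have e1 : (∫ a, |φ a| ^ (3 : ℕ) * |φ a| ∂μ) = I4 := by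
      rw [hI4def]
      refine integral_congr_ae (Filter.Eventually.of_forall fun x => ?_)
      show |φ x| ^ (3 : ℕ) * |φ x| = φ x ^ 4
      rw [show |φ x| ^ (3 : ℕ) * |φ x| = |φ x| ^ 4 by ring, ← abs_pow,
        abs_of_nonneg (by positivity)]
    have e2 : (∫ a, (|φ a| ^ (3 : ℕ)) ^ (2 : ℝ) ∂μ) = I6 := by
      rw [hI6def]
      refine integral_congr_ae (Filter.Eventually.of_forall fun x => ?_)
      show (|φ x| ^ (3 : ℕ)) ^ (2 : ℝ) = |φ x| ^ 6
      rw [show (2 : ℝ) = ((2 : ℕ) : ℝ) by norm_num, Real.rpow_natCast]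
      ring
    have e3 : (∫ a, |φ a| ^ (2 : ℝ) ∂μ) = I2 := by
      rw [hI2def]
      refine integral_congr_ae (Filter.Eventually.of_forall fun x => ?_)
      show |φ x| ^ (2 : ℝ) = φ x ^ 2
      rw [show (2 : ℝ) = ((2 : ℕ) : ℝ) by norm_num, Real.rpow_natCast, sq_abs]
    rwa [e1, e2, e3] at this
  -- hence I4^{1/2} ≤ I6^{1/4} * I2^{1/4}
  have hCS' : I4 ^ ((1 : ℝ) / 2) ≤ I6 ^ ((1 : ℝ) / 4) * I2 ^ ((1 : ℝ) / 4) := by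
    calc I4 ^ ((1 : ℝ) / 2) ≤ (I6 ^ ((1 : ℝ) / 2) * I2 ^ ((1 : ℝ) / 2)) ^ ((1 : ℝ) / 2) :=
          Real.rpow_le_rpow hI4 hCS (by norm_num)
      _ = I6 ^ ((1 : ℝ) / 4) * I2 ^ ((1 : ℝ) / 4) := by
          rw [Real.mul_rpow (by positivity) (by positivity), ← Real.rpow_mul hI6,
            ← Real.rpow_mul hI2]
          norm_num
  -- set A, B
  set A := Y * I6 ^ ((1 : ℝ) / 3) with hAdef
  set B := κ * I2 with hBdef
  have hA : 0 ≤ A := by positivity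
  have hB : 0 ≤ B := by positivity
  -- AM-GM
  have hAMGM : A ^ ((3 : ℝ) / 4) * B ^ ((1 : ℝ) / 4) ≤ 3 / 4 * A + 1 / 4 * B :=
    Real.geom_mean_le_arith_mean2_weighted (by norm_num) (by norm_num) hA hB (by norm_num)
  -- identify LHS
  have hLHS : Y ^ ((3 : ℝ) / 4) * κ ^ ((1 : ℝ) / 4) * (I6 ^ ((1 : ℝ) / 4) * I2 ^ ((1 : ℝ) / 4))
      = A ^ ((3 : ℝ) / 4) * B ^ ((1 : ℝ) / 4) := by
    rw [hAdef, hBdef, Real.mul_rpow hY (by positivity), Real.mul_rpow hκ hI2,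
      ← Real.rpow_mul hI6]
    norm_num
    ring
  -- integral identities
  have hi8 : (∫ x, (8 * f x + s x * φ x ^ 2) ∂μ)
      = 8 * (∫ x, f x ∂μ) + ∫ x, s x * φ x ^ 2 ∂μ := by
    rw [integral_add (hfint.const_mul 8) hsφ, integral_const_mul]
  have hi6 : (∫ x, (6 * f x + s x * φ x ^ 2) ∂μ)
      = 6 * (∫ x, f x ∂μ) + ∫ x, s x * φ x ^ 2 ∂μ := by
    rw [integral_add (hfint.const_mul 6) hsφ, integral_const_mul]
  have hFnn : 0 ≤ ∫ x, f x ∂μ := integral_nonneg hf0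
  -- B ≤ ∫ s φ²
  have hφ2int : Integrable (fun x => φ x ^ 2) μ := by
    have := hφ2.integrable_norm_rpow (by norm_num) (by norm_num)
    refine this.congr (Filter.Eventually.of_forall fun x => ?_)
    show ‖φ x‖ ^ ((2 : ENNReal)).toReal = φ x ^ 2
    rw [show ((2 : ENNReal)).toReal = ((2 : ℕ) : ℝ) by simp, Real.rpow_natCast,
      Real.norm_eq_abs, sq_abs]
  have hBle : B ≤ ∫ x, s x * φ x ^ 2 ∂μ := by
    rw [hBdef, ← integral_const_mul]
    refine integral_mono (hφ2int.const_mul κ) hsφ fun x => ?_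
    exact mul_le_mul_of_nonneg_right (hsκ x) (by positivity)
  -- A ≤ ∫ 8f + sφ²
  have hAle : A ≤ 8 * (∫ x, f x ∂μ) + ∫ x, s x * φ x ^ 2 ∂μ := by
    rw [hAdef]
    calc Y * I6 ^ ((1 : ℝ) / 3) ≤ ∫ x, (8 * f x + s x * φ x ^ 2) ∂μ := hY6
      _ = _ := hi8
  calc Y ^ ((3 : ℝ) / 4) * κ ^ ((1 : ℝ) / 4) * I4 ^ ((1 : ℝ) / 2)
      ≤ Y ^ ((3 : ℝ) / 4) * κ ^ ((1 : ℝ) / 4) * (I6 ^ ((1 : ℝ) / 4) * I2 ^ ((1 : ℝ) / 4)) := by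
        refine mul_le_mul_of_nonneg_left hCS' (by positivity)
    _ = A ^ ((3 : ℝ) / 4) * B ^ ((1 : ℝ) / 4) := hLHS
    _ ≤ 3 / 4 * A + 1 / 4 * B := hAMGM
    _ ≤ 3 / 4 * (8 * (∫ x, f x ∂μ) + ∫ x, s x * φ x ^ 2 ∂μ)
        + 1 / 4 * (∫ x, s x * φ x ^ 2 ∂μ) := by
          gcongr
    _ = 6 * (∫ x, f x ∂μ) + ∫ x, s x * φ x ^ 2 ∂μ := by ring
    _ = ∫ x, (6 * f x + s x * φ x ^ 2) ∂μ := hi6.symm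
end
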